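/- Let a > 0, ℓ ∈ ℕ, and x ≥ 0. Set ζ_a = (a−1)/(a+1) and λ_{n,a}^{(ℓ)} = ∑_{j=0}^ℓ σ_{j,ℓ}(ζ_a) ω_{n,j,ℓ}(ζ_a) for n ∈ ℕ. Then the series ∑_{n=0}^∞ λ_{n,a}^{(ℓ)} L_n(x) e^{−x/2} converges and its sum equals L_ℓ(a x) e^{−a x/2}. (This is the scaled characteristic-function identity ⟨W_z⟩_{ρ_a^{(ℓ)}} = L_ℓ(a|z|²/2) e^{−a|z|²/4} with x = |z|²/2.) -/

import Mathlib

/-- The Laguerre polynomial `L_n(x) = ∑_{k=0}^n (-1)^k (n choose k) x^k / k!`. -/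
noncomputable def laguerre (n : ℕ) (x : ℝ) : ℝ :=
  ∑ k ∈ Finset.range (n + 1), (-1) ^ k * (n.choose k : ℝ) * x ^ k / (k.factorial : ℝ)

/-- `σ_{j,ℓ}(ζ) = binom(ℓ,j) (−ζ)^j (1+ζ)^{ℓ−j}`. -/
noncomputable def sigmaCoeff (j ℓ : ℕ) (ζ : ℝ) : ℝ :=
  (ℓ.choose j : ℝ) * (-ζ) ^ j * (1 + ζ) ^ (ℓ - j)

/-- `ω_{n,j,ℓ}(ζ) = binom(n, ℓ−j) ζ^{n−(ℓ−j)} (1−ζ)^{ℓ−j+1}` if `n ≥ ℓ−j`, else `0`. -/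
noncomputable def omegaCoeff (n j ℓ : ℕ) (ζ : ℝ) : ℝ :=
  if ℓ - j ≤ n then (n.choose (ℓ - j) : ℝ) * ζ ^ (n - (ℓ - j)) * (1 - ζ) ^ (ℓ - j + 1)
  else 0

/-- The eigenvalues `λ_{n,a}^{(ℓ)}` of the operator `ρ_a^{(ℓ)}`, with `ζ_a = (a−1)/(a+1)`. -/
noncomputable def lamEig (a : ℝ) (ℓ n : ℕ) : ℝ :=
  ∑ j ∈ Finset.range (ℓ + 1),
    sigmaCoeff j ℓ ((a - 1) / (a + 1)) * omegaCoeff n j ℓ ((a - 1) / (a + 1))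

open Finset


/-- Alternating Vandermonde / finite difference identity. -/
lemma altVand : ∀ (c k N : ℕ), c ≤ N → c ≤ k →
    ∑ d ∈ range (c+1), ((-1:ℝ)^d * (c.choose d : ℝ) * ((N-d).choose k : ℝ))
      = ((N-c).choose (k-c) : ℝ) := by
  intro c
  induction c with
  | zero => intro k N _ _; simp
  | succ c ih =>
    intro k N hN hk
    have hsplit : ∀ d ∈ range (c+2),
        ((-1:ℝ)^d * ((c+1).choose d : ℝ) * ((N-d).choose k : ℝ))
          = (-1:ℝ)^d * (c.choose d : ℝ) * ((N-d).choose k : ℝ)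
            + (if d = 0 then 0 else (-1:ℝ)^d * (c.choose (d-1) : ℝ) * ((N-d).choose k : ℝ)) := by
      intro d _
      rcases Nat.eq_zero_or_pos d with h0 | h0
      · simp [h0]
      · obtain ⟨e, rfl⟩ := Nat.exists_eq_succ_of_ne_zero h0.ne'
        rw [if_neg (Nat.succ_ne_zero e)]
        rw [Nat.choose_succ_succ' c e]
        push_cast
        ring_nf
        simp [Nat.succ_sub_one]
        ring
    rw [Finset.sum_congr rfl hsplit, Finset.sum_add_distrib]
    have h1 : ∑ d ∈ range (c+2), ((-1:ℝ)^d * (c.choose d : ℝ) * ((N-d).choose k : ℝ))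
        = ((N-c).choose (k-c) : ℝ) := by
      rw [Finset.sum_range_succ]
      rw [ih k N (le_trans (Nat.le_succ c) hN) (le_trans (Nat.le_succ c) hk)]
      simp [Nat.choose_succ_self]
    have h2 : ∑ d ∈ range (c+2),
        (if d = 0 then (0:ℝ) else (-1:ℝ)^d * (c.choose (d-1) : ℝ) * ((N-d).choose k : ℝ))
        = - (((N-1-c).choose (k-c) : ℝ)) := by
      rw [Finset.sum_range_succ']
      have : ∀ d ∈ range (c+1),
          (if d+1 = 0 then (0:ℝ) else (-1:ℝ)^(d+1) * (c.choose (d+1-1) : ℝ) * ((N-(d+1)).choose k : ℝ))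
          = -((-1:ℝ)^d * (c.choose d : ℝ) * ((N-1-d).choose k : ℝ)) := by
        intro d _
        rw [if_neg (Nat.succ_ne_zero d)]
        have h3 : N - (d+1) = N - 1 - d := by omega
        rw [h3]
        simp only [Nat.add_sub_cancel]
        ring
      rw [Finset.sum_congr rfl this, Finset.sum_neg_distrib]
      rw [ih k (N-1) (by omega) (by omega)]
      simp
    rw [h1, h2]
    have hNc : N - c = (N - 1 - c) + 1 := by omega
    have hkc : k - c = (k - 1 - c) + 1 := by omega
    have hkc' : k - (c+1) = k - 1 - c := by omega
    have hNc' : N - (c+1) = N - 1 - c := by omega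
    rw [hNc, hkc, Nat.choose_succ_succ, hkc', hNc']
    push_cast
    ring


/-- symmetric double choice -/
lemma chooseSym {N p q : ℕ} (h : p + q ≤ N) :
    N.choose p * (N-p).choose q = N.choose q * (N-q).choose p := by
  have h1 := Nat.choose_mul (n := N) (show p ≤ p + q from Nat.le_add_right _ _)
  have h2 := Nat.choose_mul (n := N) (show q ≤ p + q from Nat.le_add_left _ _)
  -- h1 : N.choose (p+q) * (p+q).choose p = N.choose p * (N-p).choose (p+q-p)
  have hp : p + q - p = q := by omega
  have hq : p + q - q = p := by omega
  rw [hp] at h1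
  rw [hq] at h2
  have h4 : (p+q).choose p = (p+q).choose q := by
    have h5 := Nat.choose_symm (Nat.le_add_right p q)
    rw [hp] at h5
    exact h5.symm
  rw [h4] at h1
  exact h1.symm.trans h2

lemma chooseProdTerm {n m k i : ℕ} (hik : i ≤ k) (him : i ≤ m) (hmn : m ≤ n)
    (hR : m + k - i ≤ n) :
    n.choose m * (m.choose i * (n-m).choose (k-i)) =
      (m+k-i).choose k * k.choose i * n.choose (m+k-i) := by
  have hkn : k ≤ n := by omega
  have e1 : n.choose m * m.choose i = n.choose i * (n-i).choose (m-i) :=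
    Nat.choose_mul (n := n) him
  have e2 : n.choose k * k.choose i = n.choose i * (n-i).choose (k-i) :=
    Nat.choose_mul (n := n) hik
  have e3 : n.choose (m+k-i) * (m+k-i).choose k = n.choose k * (n-k).choose (m+k-i-k) :=
    Nat.choose_mul (n := n) (by omega)
  have h4 : m+k-i-k = m - i := by omega
  rw [h4] at e3
  have e4 : (n-i).choose (m-i) * ((n-i)-(m-i)).choose (k-i)
      = (n-i).choose (k-i) * ((n-i)-(k-i)).choose (m-i) :=
    chooseSym (by omega)
  have h5 : (n-i)-(m-i) = n - m := by omega
  have h6 : (n-i)-(k-i) = n - k := by omega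
  rw [h5, h6] at e4
  calc n.choose m * (m.choose i * (n-m).choose (k-i))
      = (n.choose m * m.choose i) * (n-m).choose (k-i) := by ring
    _ = n.choose i * ((n-i).choose (m-i) * (n-m).choose (k-i)) := by rw [e1]; ring
    _ = n.choose i * ((n-i).choose (k-i) * (n-k).choose (m-i)) := by rw [e4]
    _ = (n.choose i * (n-i).choose (k-i)) * (n-k).choose (m-i) := by ring
    _ = (n.choose k * k.choose i) * (n-k).choose (m-i) := by rw [e2]
    _ = (n.choose k * (n-k).choose (m-i)) * k.choose i := by ring
    _ = (n.choose (m+k-i) * (m+k-i).choose k) * k.choose i := by rw [e3]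
    _ = (m+k-i).choose k * k.choose i * n.choose (m+k-i) := by ring

lemma chooseProd (n m k : ℕ) : (n.choose m : ℝ) * (n.choose k : ℝ)
    = ∑ i ∈ range (k+1), ((m+k-i).choose k : ℝ) * (k.choose i : ℝ) * (n.choose (m+k-i) : ℝ) := by
  rcases lt_or_ge n m with h | hmn
  · rw [Nat.choose_eq_zero_of_lt h]
    rw [Finset.sum_eq_zero]
    · simp
    intro i hi
    rw [Finset.mem_range] at hi
    have : n < m + k - i := by omega
    rw [Nat.choose_eq_zero_of_lt this]
    simp
  · -- n ≥ m : Vandermonde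
    have hv : (n.choose k : ℕ) = ∑ i ∈ range (k+1), m.choose i * (n-m).choose (k-i) := by
      conv_lhs => rw [show n = m + (n - m) by omega]
      rw [Nat.add_choose_eq]
      rw [Finset.Nat.sum_antidiagonal_eq_sum_range_succ (fun a b => m.choose a * (n-m).choose b)]
    have : (n.choose m : ℝ) * (n.choose k : ℝ)
        = ∑ i ∈ range (k+1), (n.choose m : ℝ) * (m.choose i * (n-m).choose (k-i) : ℕ) := by
      rw [← Finset.mul_sum, ← Nat.cast_sum, ← hv]
    rw [this]
    apply Finset.sum_congr rfl
    intro i hi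
    rw [Finset.mem_range] at hi
    have hik : i ≤ k := by omega
    rcases lt_or_ge m i with h1 | him
    · -- i > m : both sides zero
      rw [Nat.choose_eq_zero_of_lt h1]
      have : m + k - i < k := by omega
      rw [Nat.choose_eq_zero_of_lt this]
      push_cast
      ring
    rcases lt_or_ge n (m + k - i) with h2 | hR
    · -- n < m+k-i : both sides zero
      have : n - m < k - i := by omega
      rw [Nat.choose_eq_zero_of_lt this, Nat.choose_eq_zero_of_lt h2]
      push_cast
      ring
    · rw_mod_cast [← chooseProdTerm hik him hmn hR]


lemma binExpand (i : ℕ) (t : ℝ) :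
    (1-t)^i = ∑ q ∈ range (i+1), (-1:ℝ)^(i-q) * t^(i-q) * (i.choose q : ℝ) := by
  have h : (1:ℝ) - t = -t + 1 := by ring
  rw [h, add_pow, ← Finset.sum_range_reflect]
  apply Finset.sum_congr rfl
  intro q hq
  rw [mem_range] at hq
  have h1 : i + 1 - 1 - q = i - q := by omega
  rw [h1]
  have h2 : i - (i - q) = q := by omega
  rw [h2]
  have h3 : i.choose (i - q) = i.choose q := by
    rw [← Nat.choose_symm (by omega : q ≤ i)]
  rw [h3, one_pow, neg_pow]
  ring

lemma dagger (m k : ℕ) (t : ℝ) :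
    ∑ i ∈ range (k+1), ((m+k-i).choose k : ℝ) * (k.choose i : ℝ) * t^(k-i) * (1-t)^i
      = ∑ q ∈ range (k+1), (m.choose q : ℝ) * (k.choose q : ℝ) * t^(k-q) := by
  have step1 : ∀ i ∈ range (k+1),
      ((m+k-i).choose k : ℝ) * (k.choose i : ℝ) * t^(k-i) * (1-t)^i
        = ∑ q ∈ range (k+1),
            ((m+k-i).choose k : ℝ) * (k.choose i : ℝ) * (i.choose q : ℝ)
              * (-1:ℝ)^(i-q) * t^(k-q) := by
    intro i hi
    rw [mem_range] at hi
    have hik : i ≤ k := by omega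
    rw [binExpand i t, Finset.mul_sum]
    rw [← Finset.sum_subset (Finset.range_subset_range.2 (by omega : i+1 ≤ k+1))
      (by
        intro q _ hq
        rw [mem_range, not_lt] at hq
        rw [Nat.choose_eq_zero_of_lt (by omega : i < q)]
        push_cast
        ring)]
    apply Finset.sum_congr rfl
    intro q hq
    rw [mem_range] at hq
    have ht : t^(k-i) * t^(i-q) = t^(k-q) := by
      rw [← pow_add]
      congr 1
      omega
    calc ((m+k-i).choose k : ℝ) * (k.choose i : ℝ) * t^(k-i)
          * ((-1:ℝ)^(i-q) * t^(i-q) * (i.choose q : ℝ))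
        = ((m+k-i).choose k : ℝ) * (k.choose i : ℝ) * (i.choose q : ℝ)
            * (-1:ℝ)^(i-q) * (t^(k-i) * t^(i-q)) := by ring
      _ = _ := by rw [ht]
  rw [Finset.sum_congr rfl step1, Finset.sum_comm]
  apply Finset.sum_congr rfl
  intro q hq
  rw [mem_range] at hq
  have hqk : q ≤ k := by omega
  -- split the i-sum at q
  rw [Finset.range_eq_Ico, ← Finset.sum_Ico_consecutive _ (Nat.zero_le q) (by omega : q ≤ k+1)]
  have hzero : ∑ i ∈ Finset.Ico 0 q,
      ((m+k-i).choose k : ℝ) * (k.choose i : ℝ) * (i.choose q : ℝ) * (-1:ℝ)^(i-q) * t^(k-q) = 0 := by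
    apply Finset.sum_eq_zero
    intro i hi
    rw [Finset.mem_Ico] at hi
    rw [Nat.choose_eq_zero_of_lt hi.2]
    push_cast
    ring
  rw [hzero, zero_add, Finset.sum_Ico_eq_sum_range]
  have hterm : ∀ d ∈ range (k+1-q),
      ((m+k-(q+d)).choose k : ℝ) * (k.choose (q+d) : ℝ) * ((q+d).choose q : ℝ)
        * (-1:ℝ)^(q+d-q) * t^(k-q)
      = ((k.choose q : ℝ) * t^(k-q)) *
          ((-1:ℝ)^d * ((k-q).choose d : ℝ) * (((m+k-q)-d).choose k : ℝ)) := by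
    intro d hd
    rw [mem_range] at hd
    have h1 : q + d - q = d := by omega
    have h2 : m + k - (q+d) = (m+k-q) - d := by omega
    have h3 : (k.choose (q+d)) * ((q+d).choose q) = k.choose q * (k-q).choose d := by
      have := Nat.choose_mul (n := k) (by omega : q ≤ q+d)
      rw [show q + d - q = d by omega] at this
      exact this
    rw [h1, h2]
    have h3' : (k.choose (q+d) : ℝ) * ((q+d).choose q : ℝ) = (k.choose q : ℝ) * ((k-q).choose d : ℝ) := by
      exact_mod_cast congrArg (fun z : ℕ => (z : ℝ)) h3
    calc ((m+k-q-d).choose k : ℝ) * (k.choose (q+d) : ℝ) * ((q+d).choose q : ℝ)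
          * (-1:ℝ)^d * t^(k-q)
        = ((k.choose (q+d) : ℝ) * ((q+d).choose q : ℝ)) * (((m+k-q-d).choose k : ℝ)
            * (-1:ℝ)^d * t^(k-q)) := by ring
      _ = ((k.choose q : ℝ) * ((k-q).choose d : ℝ)) * (((m+k-q-d).choose k : ℝ)
            * (-1:ℝ)^d * t^(k-q)) := by rw [h3']
      _ = _ := by ring
  rw [Finset.sum_congr rfl hterm, ← Finset.mul_sum]
  have hrange : k + 1 - q = (k-q) + 1 := by omega
  rw [hrange]
  rw [altVand (k-q) k (m+k-q) (by omega) (by omega)]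
  have h4 : m + k - q - (k-q) = m := by omega
  have h5 : k - (k-q) = q := by omega
  rw [h4, h5]
  ring


lemma hasSum_choose_sub (R mm : ℕ) (hm : mm ≤ R) {t : ℝ} (ht : |t| < 1) :
    HasSum (fun n : ℕ => (n.choose R : ℝ) * t^(n-mm)) (t^(R-mm) / (1-t)^(R+1)) := by
  have h0 := hasSum_choose_mul_geometric_of_norm_lt_one (𝕜 := ℝ) R
    (by rwa [Real.norm_eq_abs] : ‖t‖ < 1)
  have h1 := h0.mul_left (t^(R-mm))
  have hfun : (fun n : ℕ => t^(R-mm) * (((n+R).choose R : ℝ) * t^n))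
      = fun n : ℕ => ((n+R).choose R : ℝ) * t^((n+R)-mm) := by
    funext n
    have : (n+R) - mm = (R - mm) + n := by omega
    rw [this, pow_add]
    ring
  rw [hfun] at h1
  have h2 := (hasSum_nat_add_iff (f := fun n : ℕ => (n.choose R : ℝ) * t^(n-mm)) R).mp h1
  have hz : ∑ i ∈ range R, (i.choose R : ℝ) * t^(i-mm) = 0 := by
    apply Finset.sum_eq_zero
    intro i hi
    rw [mem_range] at hi
    rw [Nat.choose_eq_zero_of_lt hi]
    simp
  rw [hz, add_zero] at h2
  rw [mul_one_div] at h2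
  exact h2

lemma hasSum_column (m k : ℕ) {t : ℝ} (ht : |t| < 1) :
    HasSum (fun n : ℕ => (n.choose m : ℝ) * (n.choose k : ℝ) * t^(n-m))
      (∑ i ∈ range (k+1),
        ((m+k-i).choose k : ℝ) * (k.choose i : ℝ) * (t^(k-i) / (1-t)^(m+k-i+1))) := by
  have each : ∀ i ∈ range (k+1), HasSum
      (fun n : ℕ => ((m+k-i).choose k : ℝ) * (k.choose i : ℝ) * ((n.choose (m+k-i) : ℝ) * t^(n-m)))
      (((m+k-i).choose k : ℝ) * (k.choose i : ℝ) * (t^(k-i) / (1-t)^(m+k-i+1))) := by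
    intro i hi
    rw [mem_range] at hi
    have h := (hasSum_choose_sub (m+k-i) m (by omega) ht).mul_left
      (((m+k-i).choose k : ℝ) * (k.choose i : ℝ))
    have e1 : (m+k-i) - m = k - i := by omega
    rw [e1] at h
    exact h
  have total := hasSum_sum each
  have hfun : (fun n : ℕ => ∑ i ∈ range (k+1),
      ((m+k-i).choose k : ℝ) * (k.choose i : ℝ) * ((n.choose (m+k-i) : ℝ) * t^(n-m)))
      = fun n : ℕ => (n.choose m : ℝ) * (n.choose k : ℝ) * t^(n-m) := by
    funext n
    rw [show ((n.choose m : ℝ) * (n.choose k : ℝ) * t^(n-m))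
        = ((n.choose m : ℝ) * (n.choose k : ℝ)) * t^(n-m) from by ring]
    rw [chooseProd n m k, Finset.sum_mul]
    apply Finset.sum_congr rfl
    intro i _
    ring
  rw [hfun] at total
  exact total

lemma summable_aux (m : ℕ) {s : ℝ} (hs0 : 0 < s) (hs1 : s < 1) :
    Summable (fun n : ℕ => ((n:ℝ)+1)^m * s^n) := by
  have hnorm : ‖s‖ < 1 := by rw [Real.norm_eq_abs, abs_of_pos hs0]; exact hs1
  have g := summable_pow_mul_geometric_of_norm_lt_one (R := ℝ) m hnorm
  have g2 : Summable (fun n : ℕ => ((n+1:ℕ):ℝ)^m * s^(n+1)) :=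
    g.comp_injective (add_left_injective 1)
  have g3 := g2.mul_left s⁻¹
  apply g3.congr
  intro n
  push_cast
  rw [pow_succ]
  field_simp

set_option maxHeartbeats 1000000 in
lemma gen (m : ℕ) {t x : ℝ} (ht : |t| < 1) (hx : 0 ≤ x) :
    HasSum (fun n : ℕ => ((n.choose m : ℝ) * t^(n-m) * (1-t)^(m+1)) * laguerre n x)
      (Real.exp (-(x*t)/(1-t)) * laguerre m (x/(1-t))) := by
  have h1t : (1:ℝ) - t ≠ 0 := by
    intro h
    rw [sub_eq_zero] at h
    rw [← h] at ht
    simp at ht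
  obtain ⟨r, hr⟩ : ∃ r : ℝ, r = |t| := ⟨_, rfl⟩
  rw [← hr] at ht
  have hr0 : 0 ≤ r := hr ▸ abs_nonneg t
  obtain ⟨ρ, hρ⟩ : ∃ p : ℝ, p = (1+r)/2 := ⟨_, rfl⟩
  have hρ0 : 0 < ρ := by rw [hρ]; positivity
  have hρ1 : ρ < 1 := by rw [hρ]; linarith
  have hrρ : r ≤ ρ := by rw [hρ]; linarith
  have hρhalf : (1:ℝ)/2 ≤ ρ := by rw [hρ]; linarith
  obtain ⟨ε, hε⟩ : ∃ e : ℝ, e = (1-ρ)/2 := ⟨_, rfl⟩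
  have hε0 : 0 < ε := by rw [hε]; linarith
  obtain ⟨s, hsdef⟩ : ∃ q : ℝ, q = ρ * Real.exp ε := ⟨_, rfl⟩
  have hs0 : 0 < s := by rw [hsdef]; positivity
  have hs1 : s < 1 := by
    have hlog := Real.log_le_sub_one_of_pos hρ0
    have h2 : ε < -Real.log ρ := by rw [hε]; linarith
    have h3 : Real.exp ε < Real.exp (-Real.log ρ) := Real.exp_lt_exp.2 h2
    rw [Real.exp_neg, Real.exp_log hρ0] at h3
    calc s = ρ * Real.exp ε := hsdef
      _ < ρ * ρ⁻¹ := by exact mul_lt_mul_of_pos_left h3 hρ0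
      _ = 1 := mul_inv_cancel₀ hρ0.ne'
  -- the double-indexed family
  obtain ⟨f, hfdef⟩ : ∃ f : ℕ × ℕ → ℝ, f = fun p =>
    ((p.1.choose m : ℝ) * t^(p.1-m) * (1-t)^(m+1)) *
      ((-1)^p.2 * (p.1.choose p.2 : ℝ) * x^p.2 / (p.2.factorial : ℝ)) := ⟨_, rfl⟩
  -- summability
  have hbound : ∀ p : ℕ × ℕ,
      ‖f p‖ ≤ (2^(2*m+1) * ((p.1:ℝ)+1)^m * s^p.1) * ((x/ε)^p.2 / (p.2.factorial : ℝ)) := by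
    rintro ⟨n, k⟩
    have hfact : (0:ℝ) < (k.factorial : ℝ) := by exact_mod_cast k.factorial_pos
    have habs : ‖f (n, k)‖
        = (n.choose m : ℝ) * r^(n-m) * |1-t|^(m+1) * ((n.choose k : ℝ) * x^k / (k.factorial : ℝ)) := by
      simp only [hfdef, Real.norm_eq_abs, abs_mul, abs_div, abs_pow, abs_neg, abs_one,
        one_pow, Nat.abs_cast]
      rw [abs_of_nonneg hx, ← hr]
      ring
    rw [habs]
    have hA : (n.choose m : ℝ) ≤ ((n:ℝ)+1)^m := by
      calc (n.choose m : ℝ) ≤ (n:ℝ)^m := by exact_mod_cast Nat.choose_le_pow n m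
        _ ≤ ((n:ℝ)+1)^m := by
          apply pow_le_pow_left₀ (by positivity)
          · linarith
    have hB : r^(n-m) ≤ 2^m * ρ^n := by
      have b1 : r^(n-m) ≤ ρ^(n-m) := pow_le_pow_left₀ hr0 hrρ _
      have b2 : ρ^(n-m) * ρ^m ≤ ρ^n := by
        rw [← pow_add]
        exact pow_le_pow_of_le_one hρ0.le hρ1.le (by omega)
      have b3 : (1:ℝ) ≤ 2^m * ρ^m := by
        calc (1:ℝ) = 2^m * (1/2)^m := by
              rw [← mul_pow]; norm_num
          _ ≤ 2^m * ρ^m := by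
              apply mul_le_mul_of_nonneg_left (pow_le_pow_left₀ (by norm_num) hρhalf m)
                (by positivity)
      calc r^(n-m) ≤ ρ^(n-m) := b1
        _ = ρ^(n-m) * 1 := (mul_one _).symm
        _ ≤ ρ^(n-m) * (2^m * ρ^m) := mul_le_mul_of_nonneg_left b3 (by positivity)
        _ = 2^m * (ρ^(n-m) * ρ^m) := by ring
        _ ≤ 2^m * ρ^n := mul_le_mul_of_nonneg_left b2 (by positivity)
    have hC : |1-t|^(m+1) ≤ 2^(m+1) := by
      apply pow_le_pow_left₀ (abs_nonneg _)
      calc |1-t| ≤ |1| + |t| := abs_sub _ _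
        _ = 1 + r := by rw [abs_one, ← hr]
        _ ≤ 2 := by
          have : r < 1 := ht
          linarith
    have hD : (n.choose k : ℝ) * x^k / (k.factorial : ℝ)
        ≤ Real.exp (ε * n) * ((x/ε)^k / (k.factorial : ℝ)) := by
      have c1 : (n.choose k : ℝ) * (k.factorial : ℝ) ≤ (n:ℝ)^k := by
        have h0 := Nat.descFactorial_le_pow n k
        have heq : n.descFactorial k = n.choose k * k.factorial := by
          rw [Nat.descFactorial_eq_factorial_mul_choose]
          ring
        rw [heq] at h0
        exact_mod_cast h0
      have c2 : ((ε*n):ℝ)^k ≤ Real.exp (ε * n) * (k.factorial : ℝ) := by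
        have h9 := Real.pow_div_factorial_le_exp (x := ε * n) (by positivity) k
        rw [div_le_iff₀ hfact] at h9
        exact h9
      have hch : (n.choose k : ℝ) ≤ Real.exp (ε*n) / ε^k := by
        rw [le_div_iff₀ (by positivity : (0:ℝ) < ε^k)]
        have e1 : ((n.choose k : ℝ) * ε^k) * (k.factorial : ℝ)
            ≤ Real.exp (ε*n) * (k.factorial : ℝ) := by
          calc ((n.choose k : ℝ) * ε^k) * (k.factorial : ℝ)
              = ε^k * ((n.choose k : ℝ) * (k.factorial : ℝ)) := by ring
            _ ≤ ε^k * (n:ℝ)^k := mul_le_mul_of_nonneg_left c1 (by positivity)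
            _ = ((ε*n):ℝ)^k := by rw [mul_pow]
            _ ≤ Real.exp (ε*n) * (k.factorial : ℝ) := c2
        exact le_of_mul_le_mul_right e1 hfact
      calc (n.choose k : ℝ) * x^k / (k.factorial : ℝ)
          = (n.choose k : ℝ) * (x^k / (k.factorial : ℝ)) := by ring
        _ ≤ (Real.exp (ε*n) / ε^k) * (x^k / (k.factorial : ℝ)) :=
            mul_le_mul_of_nonneg_right hch (by positivity)
        _ = Real.exp (ε*n) * ((x/ε)^k / (k.factorial : ℝ)) := by
            rw [div_pow]
            ring
    -- combine
    have hnn1 : (0:ℝ) ≤ (n.choose m : ℝ) := Nat.cast_nonneg _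
    have hnn2 : (0:ℝ) ≤ r^(n-m) := by positivity
    have hnn3 : (0:ℝ) ≤ |1-t|^(m+1) := by positivity
    have hnn4 : (0:ℝ) ≤ (n.choose k : ℝ) * x^k / (k.factorial : ℝ) := by positivity
    calc (n.choose m : ℝ) * r^(n-m) * |1-t|^(m+1) * ((n.choose k : ℝ) * x^k / (k.factorial : ℝ))
        ≤ ((n:ℝ)+1)^m * (2^m * ρ^n) * 2^(m+1)
            * (Real.exp (ε * n) * ((x/ε)^k / (k.factorial : ℝ))) := by
          apply mul_le_mul
          · apply mul_le_mul
            · exact mul_le_mul hA hB hnn2 (by positivity)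
            · exact hC
            · exact hnn3
            · positivity
          · exact hD
          · exact hnn4
          · positivity
      _ = (2^(2*m+1) * ((n:ℝ)+1)^m * (ρ^n * Real.exp (ε*n))) * ((x/ε)^k / (k.factorial : ℝ)) := by
          rw [show (2:ℝ)^(2*m+1) = 2^m * 2^(m+1) from by rw [← pow_add]; congr 1; omega]
          ring
      _ = (2^(2*m+1) * ((n:ℝ)+1)^m * s^n) * ((x/ε)^k / (k.factorial : ℝ)) := by
          congr 2
          rw [hsdef, mul_pow, ← Real.exp_nat_mul]
          ring_nf
  have hgsum : Summable (fun n : ℕ => 2^(2*m+1) * ((n:ℝ)+1)^m * s^n) := by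
    have := (summable_aux m hs0 hs1).mul_left (2^(2*m+1) : ℝ)
    apply this.congr
    intro n
    ring
  have husum : Summable (fun k : ℕ => (x/ε)^k / (k.factorial : ℝ)) :=
    Real.summable_pow_div_factorial (x/ε)
  have hprodsum : Summable (fun p : ℕ × ℕ =>
      (2^(2*m+1) * ((p.1:ℝ)+1)^m * s^p.1) * ((x/ε)^p.2 / (p.2.factorial : ℝ))) :=
    Summable.mul_of_nonneg hgsum husum
      (fun n => by positivity) (fun k => by positivity)
  have hfsum : Summable f := Summable.of_norm_bounded hprodsum hbound
  obtain ⟨A, hA⟩ : ∃ A : ℝ, A = ∑' p, f p := ⟨_, rfl⟩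
  have hfhs : HasSum f A := hA ▸ hfsum.hasSum
  -- rows
  have hrow : ∀ n : ℕ, HasSum (fun k => f (n, k))
      (((n.choose m : ℝ) * t^(n-m) * (1-t)^(m+1)) * laguerre n x) := by
    intro n
    have hterm : HasSum (fun k => (-1)^k * (n.choose k : ℝ) * x^k / (k.factorial : ℝ))
        (laguerre n x) := by
      have hz : ∀ k ∉ range (n+1), (-1:ℝ)^k * (n.choose k : ℝ) * x^k / (k.factorial : ℝ) = 0 := by
        intro k hk
        rw [mem_range, not_lt] at hk
        rw [Nat.choose_eq_zero_of_lt (by omega)]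
        simp
      exact hasSum_sum_of_ne_finset_zero hz
    have h2 := hterm.mul_left ((n.choose m : ℝ) * t^(n-m) * (1-t)^(m+1))
    have hfun : (fun k => ((n.choose m : ℝ) * t^(n-m) * (1-t)^(m+1)) *
        ((-1)^k * (n.choose k : ℝ) * x^k / (k.factorial : ℝ))) = fun k => f (n, k) := by
      funext k
      simp only [hfdef]
    rw [hfun] at h2
    exact h2
  have hrows : HasSum (fun n => ((n.choose m : ℝ) * t^(n-m) * (1-t)^(m+1)) * laguerre n x) A :=
    hfhs.prod_fiberwise hrow
  -- columns
  obtain ⟨v, hvdef⟩ : ∃ v : ℕ → ℝ,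
    v = fun i => (-1)^i * (m.choose i : ℝ) * (x/(1-t))^i / (i.factorial : ℝ) := ⟨_, rfl⟩
  obtain ⟨u, hudef⟩ : ∃ u : ℕ → ℝ,
    u = fun j => (-(x*t)/(1-t))^j / (j.factorial : ℝ) := ⟨_, rfl⟩
  have hcol : ∀ k : ℕ, HasSum (fun n => f (n, k))
      (((1-t)^(m+1) * ((-1)^k * x^k / (k.factorial : ℝ))) *
        (∑ i ∈ range (k+1),
          ((m+k-i).choose k : ℝ) * (k.choose i : ℝ) * (t^(k-i) / (1-t)^(m+k-i+1)))) := by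
    intro k
    have h := (hasSum_column m k (show |t| < 1 by rw [← hr]; exact ht)).mul_left
      ((1-t)^(m+1) * ((-1)^k * x^k / (k.factorial : ℝ)))
    have hfun : (fun n : ℕ => ((1-t)^(m+1) * ((-1)^k * x^k / (k.factorial : ℝ))) *
        ((n.choose m : ℝ) * (n.choose k : ℝ) * t^(n-m))) = fun n => f (n, k) := by
      funext n
      simp only [hfdef]
      ring
    rw [hfun] at h
    exact h
  have hswap : HasSum (f ∘ (Equiv.prodComm ℕ ℕ)) A :=
    ((Equiv.prodComm ℕ ℕ).hasSum_iff).mpr hfhs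
  have hcols : HasSum (fun k => ((1-t)^(m+1) * ((-1)^k * x^k / (k.factorial : ℝ))) *
      (∑ i ∈ range (k+1),
        ((m+k-i).choose k : ℝ) * (k.choose i : ℝ) * (t^(k-i) / (1-t)^(m+k-i+1)))) A :=
    hswap.prod_fiberwise hcol
  -- Cauchy product identification
  have hv : HasSum v (laguerre m (x/(1-t))) := by
    have hz : ∀ i ∉ range (m+1), v i = 0 := by
      intro i hi
      rw [mem_range, not_lt] at hi
      simp only [hvdef]
      rw [Nat.choose_eq_zero_of_lt (by omega)]
      simp
    have h0 : HasSum v (∑ b ∈ range (m+1), v b) := hasSum_sum_of_ne_finset_zero hz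
    have : ∑ b ∈ range (m+1), v b = laguerre m (x/(1-t)) := by
      rw [laguerre, hvdef]
    rw [this] at h0
    exact h0
  have hvn : Summable (fun i => ‖v i‖) := by
    apply summable_of_ne_finset_zero (s := range (m+1))
    intro i hi
    rw [mem_range, not_lt] at hi
    simp only [hvdef]
    rw [Nat.choose_eq_zero_of_lt (by omega)]
    simp
  have hu : HasSum u (Real.exp (-(x*t)/(1-t))) := by
    rw [Real.exp_eq_exp_ℝ, hudef]
    exact NormedSpace.expSeries_div_hasSum_exp (-(x*t)/(1-t))
  have hun : Summable (fun j => ‖u j‖) := by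
    have := Real.summable_pow_div_factorial |(-(x*t)/(1-t))|
    apply this.congr
    intro j
    simp only [hudef, Real.norm_eq_abs, abs_div, abs_pow, Nat.abs_cast]
  have hC := hasSum_sum_range_mul_of_summable_norm' hvn hv.summable hun hu.summable
  rw [hv.tsum_eq, hu.tsum_eq] at hC
  -- identify the column values with the Cauchy product terms
  have hcolEq : ∀ k : ℕ,
      ((1-t)^(m+1) * ((-1)^k * x^k / (k.factorial : ℝ))) *
        (∑ i ∈ range (k+1),
          ((m+k-i).choose k : ℝ) * (k.choose i : ℝ) * (t^(k-i) / (1-t)^(m+k-i+1)))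
      = ∑ i ∈ range (k+1), v i * u (k-i) := by
    intro k
    have hkfac : ((k.factorial : ℝ)) ≠ 0 := by
      exact_mod_cast k.factorial_ne_zero
    have step1 : ∀ i ∈ range (k+1),
        (1-t)^(m+1) * (((m+k-i).choose k : ℝ) * (k.choose i : ℝ) * (t^(k-i) / (1-t)^(m+k-i+1)))
        = (((m+k-i).choose k : ℝ) * (k.choose i : ℝ) * t^(k-i) * (1-t)^i) / (1-t)^k := by
      intro i hi
      rw [mem_range] at hi
      have e1 : (1-t)^(m+k-i+1) = (1-t)^(m+1) * (1-t)^(k-i) := by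
        rw [← pow_add]
        congr 1
        omega
      have e2 : (1-t)^k = (1-t)^i * (1-t)^(k-i) := by
        rw [← pow_add]
        congr 1
        omega
      rw [e1, e2]
      have hne1 : ((1:ℝ)-t)^(k-i) ≠ 0 := pow_ne_zero _ h1t
      have hne2 : ((1:ℝ)-t)^(m+1) ≠ 0 := pow_ne_zero _ h1t
      have hne3 : ((1:ℝ)-t)^i ≠ 0 := pow_ne_zero _ h1t
      field_simp
    have hre : ((1-t)^(m+1) * ((-1)^k * x^k / (k.factorial : ℝ))) *
        (∑ i ∈ range (k+1),
          ((m+k-i).choose k : ℝ) * (k.choose i : ℝ) * (t^(k-i) / (1-t)^(m+k-i+1)))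
        = ((-1)^k * x^k / (k.factorial : ℝ)) *
          (∑ i ∈ range (k+1),
            (1-t)^(m+1) * (((m+k-i).choose k : ℝ) * (k.choose i : ℝ)
              * (t^(k-i) / (1-t)^(m+k-i+1)))) := by
      rw [Finset.mul_sum, Finset.mul_sum]
      apply Finset.sum_congr rfl
      intro i _
      ring
    rw [hre, Finset.sum_congr rfl step1, ← Finset.sum_div, dagger m k t]
    rw [Finset.sum_div, Finset.mul_sum]
    apply Finset.sum_congr rfl
    intro q hq
    rw [mem_range] at hq
    have hqk : q ≤ k := by omega
    have hfac : (k.choose q : ℝ) * (q.factorial : ℝ) * ((k-q).factorial : ℝ)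
        = (k.factorial : ℝ) := by
      exact_mod_cast Nat.choose_mul_factorial_mul_factorial hqk
    simp only [hvdef, hudef]
    have hqfac : ((q.factorial : ℝ)) ≠ 0 := by exact_mod_cast q.factorial_ne_zero
    have hkqfac : (((k-q).factorial : ℝ)) ≠ 0 := by exact_mod_cast (k-q).factorial_ne_zero
    have hnet : ((1:ℝ)-t) ≠ 0 := h1t
    have px : x^k = x^q * x^(k-q) := by rw [← pow_add]; congr 1; omega
    have ps : ((-1:ℝ))^k = (-1)^q * (-1)^(k-q) := by rw [← pow_add]; congr 1; omega
    have pt : ((1:ℝ)-t)^k = (1-t)^q * (1-t)^(k-q) := by rw [← pow_add]; congr 1; omega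
    have pu : (-(x*t)/(1-t))^(k-q) = (-1)^(k-q) * x^(k-q) * t^(k-q) / (1-t)^(k-q) := by
      rw [div_pow, neg_pow, mul_pow]
      ring
    have pv : (x/(1-t))^q = x^q/(1-t)^q := div_pow x (1-t) q
    have hckq : ((k.choose q : ℕ) : ℝ) ≠ 0 := by
      exact_mod_cast (Nat.choose_pos hqk).ne'
    have h1tq : ((1:ℝ)-t)^q ≠ 0 := pow_ne_zero _ h1t
    have h1tkq : ((1:ℝ)-t)^(k-q) ≠ 0 := pow_ne_zero _ h1t
    rw [pu, pv, px, ps, pt, ← hfac]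
    field_simp
  have hcols2 : HasSum (fun k => ∑ i ∈ range (k+1), v i * u (k-i)) A := by
    have he : (fun k : ℕ => ((1-t)^(m+1) * ((-1)^k * x^k / (k.factorial : ℝ))) *
        (∑ i ∈ range (k+1),
          ((m+k-i).choose k : ℝ) * (k.choose i : ℝ) * (t^(k-i) / (1-t)^(m+k-i+1))))
        = fun k => ∑ i ∈ range (k+1), v i * u (k-i) := funext hcolEq
    rw [he] at hcols
    exact hcols
  have hval : A = laguerre m (x/(1-t)) * Real.exp (-(x*t)/(1-t)) := hcols2.unique hC
  have hfin : Real.exp (-(x*t)/(1-t)) * laguerre m (x/(1-t)) = A := by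
    rw [hval]
    ring
  rw [← hfin] at hrows
  exact hrows


lemma chooseSplit (l j k : ℕ) :
    (l.choose j : ℝ) * ((l-j).choose k : ℝ) = (l.choose k : ℝ) * ((l-k).choose j : ℝ) := by
  rcases le_or_gt (j + k) l with h | h
  · exact_mod_cast congrArg (fun z : ℕ => (z : ℝ)) (chooseSym (by omega : j + k ≤ l))
  · rcases le_or_gt j l with hj | hj
    · rcases le_or_gt k l with hk | hk
      · rw [Nat.choose_eq_zero_of_lt (by omega : l - j < k),
          Nat.choose_eq_zero_of_lt (by omega : l - k < j)]
        simp
      · rw [Nat.choose_eq_zero_of_lt (by omega : l - j < k),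
          Nat.choose_eq_zero_of_lt (by omega : l < k)]
        simp
    · rw [Nat.choose_eq_zero_of_lt (by omega : l < j),
        Nat.choose_eq_zero_of_lt (by omega : l - k < j)]
      simp

lemma multThm (l : ℕ) (μ y : ℝ) :
    ∑ j ∈ range (l+1), (l.choose j : ℝ) * (1-μ)^j * μ^(l-j) * laguerre (l-j) y
      = laguerre l (μ*y) := by
  have expand : ∀ j ∈ range (l+1),
      (l.choose j : ℝ) * (1-μ)^j * μ^(l-j) * laguerre (l-j) y
      = ∑ k ∈ range (l+1),
          ((l.choose j : ℝ) * ((l-j).choose k : ℝ) * (1-μ)^j * μ^(l-j))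
            * ((-1)^k * y^k / (k.factorial : ℝ)) := by
    intro j hj
    rw [mem_range] at hj
    rw [laguerre, Finset.mul_sum]
    rw [← Finset.sum_subset (Finset.range_subset_range.2 (by omega : (l-j)+1 ≤ l+1))
      (by
        intro k _ hk
        rw [mem_range, not_lt] at hk
        rw [Nat.choose_eq_zero_of_lt (by omega : l - j < k)]
        push_cast
        ring)]
    apply Finset.sum_congr rfl
    intro k _
    ring
  rw [Finset.sum_congr rfl expand, Finset.sum_comm, laguerre]
  apply Finset.sum_congr rfl
  intro k hk
  rw [mem_range] at hk
  have key : ∑ j ∈ range (l+1),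
      (l.choose j : ℝ) * ((l-j).choose k : ℝ) * (1-μ)^j * μ^(l-j)
      = (l.choose k : ℝ) * μ^k := by
    have e1 : ∀ j ∈ range (l+1),
        (l.choose j : ℝ) * ((l-j).choose k : ℝ) * (1-μ)^j * μ^(l-j)
        = (l.choose k : ℝ) * ((l-k).choose j : ℝ) * (1-μ)^j * μ^(l-j) := by
      intro j _
      rw [chooseSplit l j k]
    rw [Finset.sum_congr rfl e1]
    rw [← Finset.sum_subset (Finset.range_subset_range.2 (by omega : (l-k)+1 ≤ l+1))
      (by
        intro j _ hj
        rw [mem_range, not_lt] at hj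
        rw [Nat.choose_eq_zero_of_lt (by omega : l - k < j)]
        push_cast
        ring)]
    have e2 : ∀ j ∈ range ((l-k)+1),
        (l.choose k : ℝ) * ((l-k).choose j : ℝ) * (1-μ)^j * μ^(l-j)
        = ((l.choose k : ℝ) * μ^k) * ((1-μ)^j * μ^((l-k)-j) * ((l-k).choose j : ℝ)) := by
      intro j hj
      rw [mem_range] at hj
      have : μ^(l-j) = μ^k * μ^((l-k)-j) := by
        rw [← pow_add]
        congr 1
        omega
      rw [this]
      ring
    rw [Finset.sum_congr rfl e2, ← Finset.mul_sum, ← add_pow]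
    norm_num
  rw [← Finset.sum_mul, key, mul_pow]
  ring

theorem hasSum_lam_laguerre (a : ℝ) (ha : 0 < a) (ℓ : ℕ) (x : ℝ) (hx : 0 ≤ x) :
    HasSum (fun n : ℕ => lamEig a ℓ n * laguerre n x * Real.exp (-x / 2))
      (laguerre ℓ (a * x) * Real.exp (-(a * x) / 2)) := by
  set ζ : ℝ := (a - 1) / (a + 1) with hζdef
  have ha1 : (0:ℝ) < a + 1 := by linarith
  have hζ : |ζ| < 1 := by
    rw [hζdef, abs_div, abs_of_pos ha1, div_lt_one ha1]
    rw [abs_lt]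
    constructor <;> linarith
  have h1ζ : 1 - ζ = 2 / (a+1) := by
    rw [hζdef]
    field_simp
    ring
  have h1ζpos : 0 < 1 - ζ := by rw [h1ζ]; positivity
  have hxz : x / (1 - ζ) = (a+1) * x / 2 := by
    rw [h1ζ]
    field_simp
  have hexp : -(x * ζ) / (1 - ζ) = -((a-1) * x / 2) := by
    rw [hζdef, h1ζ]
    field_simp
  have homega : ∀ n j : ℕ, omegaCoeff n j ℓ ζ
      = (n.choose (ℓ-j) : ℝ) * ζ^(n-(ℓ-j)) * (1-ζ)^((ℓ-j)+1) := by
    intro n j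
    rw [omegaCoeff]
    split_ifs with h
    · rfl
    · rw [Nat.choose_eq_zero_of_lt (by omega : n < ℓ - j)]
      push_cast
      ring
  -- per-j HasSum
  have hj : ∀ j ∈ range (ℓ+1), HasSum
      (fun n : ℕ => sigmaCoeff j ℓ ζ * omegaCoeff n j ℓ ζ * laguerre n x)
      (sigmaCoeff j ℓ ζ * (Real.exp (-(x*ζ)/(1-ζ)) * laguerre (ℓ-j) (x/(1-ζ)))) := by
    intro j _
    have h := (gen (ℓ-j) hζ hx).mul_left (sigmaCoeff j ℓ ζ)
    have hfun : (fun n : ℕ => sigmaCoeff j ℓ ζ *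
        (((n.choose (ℓ-j) : ℝ) * ζ^(n-(ℓ-j)) * (1-ζ)^((ℓ-j)+1)) * laguerre n x))
        = fun n : ℕ => sigmaCoeff j ℓ ζ * omegaCoeff n j ℓ ζ * laguerre n x := by
      funext n
      rw [homega n j]
      ring
    rw [hfun] at h
    exact h
  have hsum := hasSum_sum hj
  -- identify the function with lamEig * laguerre
  have hfun2 : (fun n : ℕ => ∑ j ∈ range (ℓ+1),
      sigmaCoeff j ℓ ζ * omegaCoeff n j ℓ ζ * laguerre n x)
      = fun n : ℕ => lamEig a ℓ n * laguerre n x := by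
    funext n
    rw [lamEig, Finset.sum_mul]
  rw [hfun2] at hsum
  -- identify the value
  have hval : ∑ j ∈ range (ℓ+1),
      sigmaCoeff j ℓ ζ * (Real.exp (-(x*ζ)/(1-ζ)) * laguerre (ℓ-j) (x/(1-ζ)))
      = laguerre ℓ (a*x) * Real.exp (-((a-1) * x / 2)) := by
    have e1 : ∀ j ∈ range (ℓ+1),
        sigmaCoeff j ℓ ζ * (Real.exp (-(x*ζ)/(1-ζ)) * laguerre (ℓ-j) (x/(1-ζ)))
        = Real.exp (-((a-1) * x / 2)) *
            ((ℓ.choose j : ℝ) * (1-(1+ζ))^j * (1+ζ)^(ℓ-j) * laguerre (ℓ-j) (x/(1-ζ))) := by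
      intro j _
      rw [sigmaCoeff, hexp]
      have : (1 - (1+ζ)) = -ζ := by ring
      rw [this]
      ring
    rw [Finset.sum_congr rfl e1, ← Finset.mul_sum, multThm ℓ (1+ζ) (x/(1-ζ))]
    have harg : (1+ζ) * (x/(1-ζ)) = a * x := by
      rw [hζdef, h1ζ]
      field_simp
      ring
    rw [harg]
    ring
  rw [hval] at hsum
  have h2 := hsum.mul_right (Real.exp (-x/2))
  have hfin : laguerre ℓ (a*x) * Real.exp (-((a-1) * x / 2)) * Real.exp (-x/2)
      = laguerre ℓ (a*x) * Real.exp (-(a*x)/2) := by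
    rw [mul_assoc, ← Real.exp_add]
    congr 2
    ring
  rw [hfin] at h2
  exact h2
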